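/- Let A be a real symmetric matrix with smallest eigenvalue λ₁ < 0, and suppose b ∉ Range(A − λ₁I). Then inf over ℝⁿ of f̃(x) = xᵀ(A − λ₁I)x − 2bᵀx + λ₁ is −∞. -/

import Mathlib

open Matrix
open scoped RealInnerProductSpace

lemma trs_key (n : ℕ) (M : Matrix (Fin n) (Fin n) ℝ) (b : Fin n → ℝ)
    (hMs : Mᵀ = M)
    (hb : ¬ ∃ y : Fin n → ℝ, M *ᵥ y = b) :
    ∃ v : Fin n → ℝ, M *ᵥ v = 0 ∧ b ⬝ᵥ v ≠ 0 := by
  by_contra h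
  push_neg at h
  apply hb
  let T : EuclideanSpace ℝ (Fin n) →ₗ[ℝ] EuclideanSpace ℝ (Fin n) :=
    { toFun := fun x => WithLp.toLp 2 (M *ᵥ x)
      map_add' := fun x y => by ext; simp [Matrix.mulVec_add]
      map_smul' := fun c x => by ext; simp [Matrix.mulVec_smul] }
  have hsym : ∀ x y : EuclideanSpace ℝ (Fin n), ⟪T x, y⟫ = ⟪x, T y⟫ := by
    intro x y
    simp only [T, LinearMap.coe_mk, AddHom.coe_mk, EuclideanSpace.inner_eq_star_dotProduct, star_trivial]
    rw [dotProduct_comm (M *ᵥ y.ofLp), Matrix.dotProduct_mulVec, ← Matrix.mulVec_transpose, hMs, dotProduct_comm]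
  have hle : LinearMap.range T ≤ (LinearMap.ker T)ᗮ := by
    rintro _ ⟨y, rfl⟩
    intro v hv
    rw [LinearMap.mem_ker] at hv
    rw [real_inner_comm, hsym, hv]
    simp
  have heq : LinearMap.range T = (LinearMap.ker T)ᗮ := by
    apply Submodule.eq_of_le_of_finrank_eq hle
    have h1 := LinearMap.finrank_range_add_finrank_ker T
    have h2 := Submodule.finrank_add_finrank_orthogonal (LinearMap.ker T)
    omega
  have hbmem : (WithLp.toLp 2 b : EuclideanSpace ℝ (Fin n)) ∈ (LinearMap.ker T)ᗮ := by
    intro v hv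
    rw [LinearMap.mem_ker] at hv
    have hb0 := h v (by simpa [T] using congrArg WithLp.ofLp hv)
    show ⟪v, (WithLp.toLp 2 b : EuclideanSpace ℝ (Fin n))⟫ = 0
    rw [real_inner_comm]
    simpa [PiLp.inner_apply, dotProduct, mul_comm] using hb0
  rw [← heq] at hbmem
  obtain ⟨y, hy⟩ := hbmem
  exact ⟨y, congrArg WithLp.ofLp hy⟩

/-- If `λ₁ < 0` is the smallest eigenvalue of symmetric `A` and
`b ∉ Range(A − λ₁I)`, then `f̃(x) = xᵀ(A − λ₁I)x − 2bᵀx + λ₁` is unbounded below. -/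
theorem trs_relaxation_unbounded_below
    (n : ℕ) (A : Matrix (Fin n) (Fin n) ℝ) (b : Fin n → ℝ) (lam1 : ℝ)
    (hA : A.IsSymm)
    (hEig : ∃ v : Fin n → ℝ, v ≠ 0 ∧ A *ᵥ v = lam1 • v)
    (hLow : ∀ x : Fin n → ℝ, lam1 * (x ⬝ᵥ x) ≤ x ⬝ᵥ (A *ᵥ x))
    (hlam : lam1 < 0)
    (hb : ¬ ∃ y : Fin n → ℝ, (A - lam1 • (1 : Matrix (Fin n) (Fin n) ℝ)) *ᵥ y = b) :
    ∀ M : ℝ, ∃ x : Fin n → ℝ,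
      x ⬝ᵥ ((A - lam1 • (1 : Matrix (Fin n) (Fin n) ℝ)) *ᵥ x) - 2 * (b ⬝ᵥ x) + lam1 < M := by
  intro M
  set Mat : Matrix (Fin n) (Fin n) ℝ := A - lam1 • (1 : Matrix (Fin n) (Fin n) ℝ) with hMat
  have hMs : Matᵀ = Mat := by
    rw [hMat, Matrix.transpose_sub, Matrix.transpose_smul, Matrix.transpose_one, hA]
  obtain ⟨v, hv0, hc⟩ := trs_key n Mat b hMs hb
  set c : ℝ := b ⬝ᵥ v with hcdef
  refine ⟨((lam1 - M + 1) / (2 * c)) • v, ?_⟩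
  set t : ℝ := (lam1 - M + 1) / (2 * c) with ht
  have h1 : Mat *ᵥ (t • v) = 0 := by rw [Matrix.mulVec_smul, hv0, smul_zero]
  have h2 : b ⬝ᵥ (t • v) = t * c := by rw [dotProduct_smul, smul_eq_mul, ← hcdef]
  rw [h1, h2, dotProduct_zero]
  have htc : t * c = (lam1 - M + 1) / 2 := by
    rw [ht]; field_simp
  rw [htc]
  linarith
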